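/- Lemma (eigengap of the population kernel matrix): let f(x) = exp(−ηx) with η > 0, suppose the means μ_1,…,μ_r ∈ ℝ^p are pairwise distinct, and let B ∈ ℝ^{r×r} be the matrix with B_{kℓ} = exp(−η·d_{kℓ}²). Then λ_r(K̃) − λ_{r+1}(K̃) ≥ (n/r)·λ_min(B)·min_k exp(−2ησ_k²) − 2·max_k (1 − exp(−2ησ_k²)). -/

import Mathlib

open Matrix

/-- The eigenvalues of a Hermitian matrix, listed in nonincreasing order:
`eigDesc hM i` is the `(i+1)`-th largest eigenvalue of `M`. -/
noncomputable def eigDesc {n : ℕ} {M : Matrix (Fin n) (Fin n) ℝ} (hM : M.IsHermitian)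
    (i : Fin n) : ℝ :=
  hM.eigenvalues (Tuple.sort hM.eigenvalues i.rev)

lemma rayleigh_lower {m : ℕ} {B : Matrix (Fin m) (Fin m) ℝ} (hB : B.IsHermitian) (lo : ℝ)
    (hlo : ∀ k, lo ≤ hB.eigenvalues k) (w : Fin m → ℝ) :
    lo * (∑ k, w k ^ 2) ≤ w ⬝ᵥ B.mulVec w := by
  set V : Matrix (Fin m) (Fin m) ℝ := (hB.eigenvectorUnitary : Matrix (Fin m) (Fin m) ℝ) with hV
  have hVV : V * star V = 1 := (Matrix.mem_unitaryGroup_iff).mp hB.eigenvectorUnitary.2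
  have hVt : Vᵀ = star V := by
    ext i j; simp [Matrix.star_eq_conjTranspose, Matrix.conjTranspose_apply]
  set c : Fin m → ℝ := (star V) *ᵥ w with hc
  have hsq : ∑ k, c k ^ 2 = ∑ k, w k ^ 2 := by
    have h1 : c ⬝ᵥ c = w ⬝ᵥ w := by
      have hVst : (star V)ᵀ = V := by rw [← hVt, transpose_transpose]
      rw [hc, dotProduct_mulVec, ← mulVec_transpose, hVst, mulVec_mulVec, hVV, one_mulVec]
    simpa [dotProduct, pow_two] using h1
  have key : w ⬝ᵥ B.mulVec w = ∑ k, hB.eigenvalues k * c k ^ 2 := by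
    conv_lhs => rw [hB.spectral_theorem]
    rw [Unitary.conjStarAlgAut_apply, ← hV]
    rw [← mulVec_mulVec, ← mulVec_mulVec, dotProduct_mulVec, ← mulVec_transpose, hVt, ← hc]
    simp only [dotProduct, mulVec_diagonal]
    apply Finset.sum_congr rfl
    intro k _
    simp [pow_two]; ring
  rw [key, ← hsq, Finset.mul_sum]
  apply Finset.sum_le_sum
  intro k _
  exact mul_le_mul_of_nonneg_right (hlo k) (sq_nonneg _)

open scoped RealInnerProductSpace in
lemma inner_euc {n : ℕ} (x y : EuclideanSpace ℝ (Fin n)) : ⟪x, y⟫ = ∑ i, x i * y i := by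
  simp [PiLp.inner_apply, RCLike.inner_apply, conj_trivial]
  exact Finset.sum_congr rfl (fun i _ => mul_comm _ _)

/-- view a plain vector as an element of Euclidean space -/
def euc {n : ℕ} (v : Fin n → ℝ) : EuclideanSpace ℝ (Fin n) := WithLp.toLp 2 v

@[simp] lemma euc_apply {n : ℕ} (v : Fin n → ℝ) (i : Fin n) : euc v i = v i := rfl

open scoped RealInnerProductSpace in
lemma mulVec_symm {n : ℕ} {M : Matrix (Fin n) (Fin n) ℝ} (hM : M.IsHermitian)
    (x y : EuclideanSpace ℝ (Fin n)) :
    ⟪euc (M.mulVec x), y⟫ = ⟪x, euc (M.mulVec y)⟫ := by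
  rw [inner_euc, inner_euc]
  have hMt : Mᵀ = M := by
    have := hM; rwa [Matrix.IsHermitian, Matrix.conjTranspose_eq_transpose_of_trivial] at this
  calc ∑ i, (euc (M.mulVec x)) i * y i = (M.mulVec x) ⬝ᵥ y := rfl
    _ = x ⬝ᵥ (M.mulVec y) := by
        rw [dotProduct_mulVec, ← mulVec_transpose, hMt]
    _ = ∑ i, x i * (euc (M.mulVec y)) i := rfl

open scoped RealInnerProductSpace in
lemma eig_decomp {n : ℕ} {M : Matrix (Fin n) (Fin n) ℝ} (hM : M.IsHermitian)
    (U : Submodule ℝ (EuclideanSpace ℝ (Fin n)))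
    (hUinv : ∀ v ∈ U, euc (M.mulVec v) ∈ U)
    {v : EuclideanSpace ℝ (Fin n)} {lam : ℝ} (hv : euc (M.mulVec v) = lam • v) :
    ∃ u w : EuclideanSpace ℝ (Fin n), u ∈ U ∧ w ∈ Uᗮ ∧ v = u + w ∧
      euc (M.mulVec u) = lam • u ∧ euc (M.mulVec w) = lam • w := by
  have hWinv : ∀ w' ∈ Uᗮ, euc (M.mulVec w') ∈ Uᗮ := by
    intro w' hw'
    rw [Submodule.mem_orthogonal]
    intro x hx
    rw [← mulVec_symm hM x w']
    exact (Submodule.mem_orthogonal U w').mp hw' _ (hUinv x hx)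
  set u : EuclideanSpace ℝ (Fin n) := (U.orthogonalProjection v : EuclideanSpace ℝ (Fin n)) with hu
  set w : EuclideanSpace ℝ (Fin n) := v - u with hw
  have huU : u ∈ U := (U.orthogonalProjection v).2
  have hwU : w ∈ Uᗮ := U.sub_starProjection_mem_orthogonal v
  have hsum : v = u + w := by rw [hw]; abel
  have hadd : euc (M.mulVec u) + euc (M.mulVec w) = lam • u + lam • w := by
    have h1 : euc (M.mulVec u) + euc (M.mulVec w) = euc (M.mulVec v) := by
      ext i
      have : v = u + w := hsum
      simp only [euc_apply, Pi.add_apply]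
      rw [this]
      have : M.mulVec (u + w) = M.mulVec u + M.mulVec w := Matrix.mulVec_add M u w
      rw [show ((u + w : EuclideanSpace ℝ (Fin n)) : Fin n → ℝ) = (u : Fin n → ℝ) + w from rfl,
        this]
      rfl
    rw [h1, hv, hsum, smul_add]
  have hzero : euc (M.mulVec u) - lam • u = 0 := by
    have haU : euc (M.mulVec u) - lam • u ∈ U := U.sub_mem (hUinv u huU) (U.smul_mem lam huU)
    have hbU : euc (M.mulVec u) - lam • u ∈ Uᗮ := by
      have : euc (M.mulVec u) - lam • u = lam • w - euc (M.mulVec w) := by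
        have := hadd; abel_nf; abel_nf at this; linear_combination (norm := abel) this
      rw [this]
      exact Uᗮ.sub_mem (Uᗮ.smul_mem lam hwU) (hWinv w hwU)
    have := (Submodule.orthogonal_disjoint U).le_bot ⟨haU, hbU⟩
    simpa using this
  have hMu : euc (M.mulVec u) = lam • u := by
    have := hzero; rwa [sub_eq_zero] at this
  refine ⟨u, w, huU, hwU, hsum, hMu, ?_⟩
  have := hadd; rw [hMu] at this
  linear_combination (norm := abel) this

lemma card_filter_le_finrank {n : ℕ} {M : Matrix (Fin n) (Fin n) ℝ} (hM : M.IsHermitian)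
    (V : Submodule ℝ (EuclideanSpace ℝ (Fin n))) (P : Fin n → Prop) [DecidablePred P]
    (h : ∀ j, P j → (hM.eigenvectorBasis j : EuclideanSpace ℝ (Fin n)) ∈ V) :
    (Finset.univ.filter P).card ≤ Module.finrank ℝ V := by
  classical
  have hli0 : LinearIndependent ℝ (⇑(hM.eigenvectorBasis)) :=
    hM.eigenvectorBasis.orthonormal.linearIndependent
  set S := Finset.univ.filter P with hS
  have hli1 : LinearIndependent ℝ (fun j : {x // x ∈ S} => (hM.eigenvectorBasis j.1 : EuclideanSpace ℝ (Fin n))) :=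
    hli0.comp Subtype.val Subtype.val_injective
  have hmem : ∀ j : {x // x ∈ S}, (hM.eigenvectorBasis j.1 : EuclideanSpace ℝ (Fin n)) ∈ V := by
    intro j
    exact h j.1 (Finset.mem_filter.mp j.2).2
  have hli2 : LinearIndependent ℝ (fun j : {x // x ∈ S} =>
      (⟨hM.eigenvectorBasis j.1, hmem j⟩ : V)) := by
    apply LinearIndependent.of_comp V.subtype
    exact hli1
  have := hli2.fintype_card_le_finrank
  simpa [Fintype.card_coe] using this

lemma eigDesc_antitone {n : ℕ} {M : Matrix (Fin n) (Fin n) ℝ} (hM : M.IsHermitian) :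
    Antitone (eigDesc hM) := by
  intro i j hij
  exact Tuple.monotone_sort hM.eigenvalues (Fin.rev_le_rev.mpr hij)

lemma card_eigDesc_filter {n : ℕ} {M : Matrix (Fin n) (Fin n) ℝ} (hM : M.IsHermitian)
    (P : ℝ → Prop) [DecidablePred P] :
    (Finset.univ.filter fun i => P (eigDesc hM i)).card
      = (Finset.univ.filter fun j => P (hM.eigenvalues j)).card := by
  apply Finset.card_bij (fun i _ => Tuple.sort hM.eigenvalues i.rev)
  · intro a ha
    simp only [Finset.mem_filter, Finset.mem_univ, true_and] at ha ⊢
    exact ha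
  · intro a _ b _ hab
    have := (Tuple.sort hM.eigenvalues).injective hab
    exact Fin.rev_injective this
  · intro b hb
    refine ⟨((Tuple.sort hM.eigenvalues).symm b).rev, ?_, ?_⟩
    · simp only [Finset.mem_filter, Finset.mem_univ, true_and] at hb ⊢
      unfold eigDesc
      rwa [Fin.rev_rev, Equiv.apply_symm_apply]
    · rw [Fin.rev_rev, Equiv.apply_symm_apply]

lemma eigDesc_le_of_count {n : ℕ} {M : Matrix (Fin n) (Fin n) ℝ} (hM : M.IsHermitian)
    {c : ℝ} (i : Fin n)
    (hcount : (Finset.univ.filter fun j => c < hM.eigenvalues j).card ≤ i.1) :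
    eigDesc hM i ≤ c := by
  by_contra hlt
  push_neg at hlt
  have hsub : Finset.Iic i ⊆ Finset.univ.filter (fun i' => c < eigDesc hM i') := by
    intro i' hi'
    simp only [Finset.mem_filter, Finset.mem_univ, true_and]
    exact lt_of_lt_of_le hlt (eigDesc_antitone hM (Finset.mem_Iic.mp hi'))
  have h1 := Finset.card_le_card hsub
  rw [Fin.card_Iic, card_eigDesc_filter hM (fun x => c < x)] at h1
  omega

lemma le_eigDesc_of_count {n : ℕ} {M : Matrix (Fin n) (Fin n) ℝ} (hM : M.IsHermitian)
    {c : ℝ} (i : Fin n)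
    (hcount : (Finset.univ.filter fun j => hM.eigenvalues j < c).card ≤ n - i.1 - 1) :
    c ≤ eigDesc hM i := by
  by_contra hlt
  push_neg at hlt
  have hsub : Finset.Ici i ⊆ Finset.univ.filter (fun i' => eigDesc hM i' < c) := by
    intro i' hi'
    simp only [Finset.mem_filter, Finset.mem_univ, true_and]
    exact lt_of_le_of_lt (eigDesc_antitone hM (Finset.mem_Ici.mp hi')) hlt
  have h1 := Finset.card_le_card hsub
  rw [Fin.card_Ici, card_eigDesc_filter hM (fun x => x < c)] at h1
  have := i.2
  omega

set_option maxHeartbeats 2000000 in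
open scoped RealInnerProductSpace in
theorem stmt_2 (n r p : ℕ) (hr : 1 ≤ r) (hn : r + 1 ≤ n) (hdvd : r ∣ n)
    (z : Fin n → Fin r)
    (hsize : ∀ k : Fin r, (Finset.univ.filter fun i => z i = k).card = n / r)
    (η : ℝ) (hη : 0 < η)
    (f : ℝ → ℝ) (hf : ∀ x, f x = Real.exp (-(η * x)))
    (μ : Fin r → Fin p → ℝ) (hdistinct : Function.Injective μ)
    (σ : Fin r → ℝ)
    (B : Matrix (Fin r) (Fin r) ℝ)
    (hB : B = Matrix.of (fun k ℓ => f (∑ t, (μ k t - μ ℓ t) ^ 2)))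
    (hBHerm : B.IsHermitian)
    (Kt : Matrix (Fin n) (Fin n) ℝ)
    (hKt : Kt = Matrix.of (fun i j => if i = j then f 0 else
      f ((∑ t, (μ (z i) t - μ (z j) t) ^ 2) + (σ (z i)) ^ 2 + (σ (z j)) ^ 2)))
    (hHerm : Kt.IsHermitian) :
    (n : ℝ) / r * (⨅ k, hBHerm.eigenvalues k) * (⨅ k, Real.exp (-(2 * η * (σ k) ^ 2))) -
      2 * (⨆ k, (1 - Real.exp (-(2 * η * (σ k) ^ 2)))) ≤
      eigDesc hHerm ⟨r - 1, by omega⟩ - eigDesc hHerm ⟨r, by omega⟩ := by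
  classical
  haveI : Nonempty (Fin r) := ⟨⟨0, hr⟩⟩
  have hr0 : (0:ℝ) < r := by positivity
  set N : ℝ := ((n / r : ℕ) : ℝ) with hNdef
  have hNcast : N = (n:ℝ) / r := by
    rw [hNdef, Nat.cast_div hdvd (by exact_mod_cast hr0.ne')]
  have hNR1 : 1 ≤ n / r := (Nat.one_le_div_iff (by omega)).mpr (by omega)
  have hN1 : (1:ℝ) ≤ N := by rw [hNdef]; exact_mod_cast hNR1
  -- abbreviations
  set Lmin : ℝ := ⨅ k, hBHerm.eigenvalues k with hLmindef
  set mσ : ℝ := ⨅ k, Real.exp (-(2 * η * (σ k) ^ 2)) with hmσdef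
  set δ : ℝ := ⨆ k, (1 - Real.exp (-(2 * η * (σ k) ^ 2))) with hδdef
  have hexple1 : ∀ k, Real.exp (-(2 * η * (σ k) ^ 2)) ≤ 1 := by
    intro k
    rw [show (1:ℝ) = Real.exp 0 by simp]
    apply Real.exp_le_exp.mpr
    nlinarith [sq_nonneg (σ k)]
  have hδ_ge : ∀ k, 1 - Real.exp (-(2 * η * (σ k) ^ 2)) ≤ δ := by
    intro k
    rw [hδdef]
    exact le_ciSup (f := fun k => 1 - Real.exp (-(2 * η * (σ k) ^ 2))) (Set.Finite.bddAbove (Set.finite_range _)) k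
  have hδ0 : 0 ≤ δ := le_trans (by linarith [hexple1 ⟨0, hr⟩]) (hδ_ge ⟨0, hr⟩)
  have hmσ_le : ∀ k, mσ ≤ Real.exp (-(2 * η * (σ k) ^ 2)) := by
    intro k
    rw [hmσdef]
    exact ciInf_le (f := fun k => Real.exp (-(2 * η * (σ k) ^ 2))) (Set.Finite.bddBelow (Set.finite_range _)) k
  have hmσpos : 0 < mσ := by
    obtain ⟨k0, hk0⟩ := Finite.exists_min (fun k => Real.exp (-(2 * η * (σ k) ^ 2)))
    have : Real.exp (-(2 * η * (σ k0) ^ 2)) ≤ mσ := by rw [hmσdef]; exact le_ciInf hk0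
    linarith [Real.exp_pos (-(2 * η * (σ k0) ^ 2))]
  have hLmin_le : ∀ k, Lmin ≤ hBHerm.eigenvalues k := by
    intro k
    rw [hLmindef]
    exact ciInf_le (f := fun k => hBHerm.eigenvalues k) (Set.Finite.bddBelow (Set.finite_range _)) k
  -- antitone fact for the trivial case and final step
  have hmono : eigDesc hHerm ⟨r, by omega⟩ ≤ eigDesc hHerm ⟨r - 1, by omega⟩ := by
    apply eigDesc_antitone hHerm
    exact Fin.mk_le_mk.mpr (by omega)
  rcases lt_or_ge Lmin 0 with hneg | hLmin0
  · -- trivial case : RHS is negative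
    have h1 : (n:ℝ)/r * Lmin * mσ < 0 := by
      apply mul_neg_of_neg_of_pos _ hmσpos
      apply mul_neg_of_pos_of_neg _ hneg
      apply div_pos _ hr0
      exact_mod_cast (by omega : 0 < n)
    linarith
  -- main case
  set s : Fin r → ℝ := fun k => Real.exp (-(η * σ k ^ 2)) with hsdef
  set g : Fin r → Fin r → ℝ :=
    fun k l => Real.exp (-(η * ((∑ t, (μ k t - μ l t) ^ 2) + σ k ^ 2 + σ l ^ 2))) with hgdef
  have hKtij : ∀ i j, Kt i j = if i = j then 1 else g (z i) (z j) := by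
    intro i j
    by_cases h : i = j <;> simp [hKt, h, hf, hgdef]
  have hgkk : ∀ k, g k k = Real.exp (-(2 * η * σ k ^ 2)) := by
    intro k
    have h0 : (∑ t, (μ k t - μ k t) ^ 2) = 0 := by simp
    rw [hgdef]
    simp only [h0]
    congr 1
    ring
  have hssq : ∀ k, s k * s k = Real.exp (-(2 * η * σ k ^ 2)) := by
    intro k
    rw [hsdef, ← Real.exp_add]
    congr 1
    ring
  have hgs : ∀ k l, g k l = s k * B k l * s l := by
    intro k l
    rw [hgdef, hsdef, hB]
    simp only [Matrix.of_apply]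
    rw [hf, ← Real.exp_add, ← Real.exp_add]
    congr 1
    ring
  have hgle1 : ∀ k, g k k ≤ 1 := fun k => (hgkk k) ▸ hexple1 k
  set e : Fin r → EuclideanSpace ℝ (Fin n) :=
    fun k => euc (fun i => if z i = k then 1 else 0) with hedef
  set U : Submodule ℝ (EuclideanSpace ℝ (Fin n)) := Submodule.span ℝ (Set.range e) with hUdef
  have heU : ∀ k, e k ∈ U := fun k => Submodule.subset_span (Set.mem_range_self k)
  have hcard : ∀ k, (((Finset.univ.filter fun i => z i = k).card : ℕ) : ℝ) = N := by
    intro k; rw [hsize k]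
  have hclus : ∀ k : Fin r, ∃ i, z i = k := by
    intro k
    have : 0 < (Finset.univ.filter fun i => z i = k).card := by rw [hsize k]; omega
    obtain ⟨i, hi⟩ := Finset.card_pos.mp this
    exact ⟨i, (Finset.mem_filter.mp hi).2⟩
  have hfib : ∀ (F : Fin n → ℝ),
      ∑ k : Fin r, ∑ i ∈ Finset.univ.filter (fun i => z i = k), F i = ∑ i, F i :=
    fun F => Finset.sum_fiberwise_of_maps_to (fun i _ => Finset.mem_univ (z i)) F
  have hsum_apply : ∀ (c : Fin r → ℝ) (i : Fin n), (∑ m, c m • e m) i = c (z i) := by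
    intro c i
    have h1 : (∑ m, c m • e m) i = ∑ m, c m * (if z i = m then 1 else 0) := by
      rw [WithLp.ofLp_sum, Finset.sum_apply]
      rfl
    rw [h1]
    simp
  -- action of Kt on a cluster indicator
  have hKe : ∀ k, euc (Kt.mulVec (e k)) = N • (∑ m, g m k • e m) + (1 - g k k) • e k := by
    intro k
    ext i
    have h1 : (Kt.mulVec (e k)) i = ∑ j ∈ Finset.univ.filter (fun j => z j = k), Kt i j := by
      rw [Matrix.mulVec, Finset.sum_filter]
      apply Finset.sum_congr rfl
      intro j _
      simp only [hedef, euc_apply]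
      by_cases h : z j = k <;> simp [h, dotProduct]
    have h2 : ((N • (∑ m, g m k • e m) + (1 - g k k) • e k) : EuclideanSpace ℝ (Fin n)) i
        = N * g (z i) k + (if z i = k then 1 - g k k else 0) := by
      have : ((N • (∑ m, g m k • e m)) : EuclideanSpace ℝ (Fin n)) i
          = N * ((∑ m, g m k • e m) i) := rfl
      simp only [PiLp.add_apply, this, hsum_apply, PiLp.smul_apply, smul_eq_mul]
      congr 1
      simp [hedef, euc_apply, mul_ite]
    rw [euc_apply, h1]
    rw [show ((N • (∑ m, g m k • e m) + (1 - g k k) • e k) : EuclideanSpace ℝ (Fin n)) i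
        = N * g (z i) k + (if z i = k then 1 - g k k else 0) from h2]
    by_cases h : z i = k
    · -- i belongs to cluster k
      have hiF : i ∈ Finset.univ.filter (fun j => z j = k) := by simp [h]
      rw [← Finset.add_sum_erase _ _ hiF]
      have hdiag : Kt i i = 1 := by rw [hKtij]; simp
      have hoff : ∀ j ∈ (Finset.univ.filter (fun j => z j = k)).erase i, Kt i j = g k k := by
        intro j hj
        have hji : j ≠ i := Finset.ne_of_mem_erase hj
        have hzj : z j = k := (Finset.mem_filter.mp (Finset.mem_of_mem_erase hj)).2
        rw [hKtij]
        simp [hji.symm ∘ Eq.symm, h, hzj]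
        intro he
        exact absurd he.symm hji
      rw [Finset.sum_congr rfl hoff, Finset.sum_const, Finset.card_erase_of_mem hiF]
      rw [hdiag, h, if_pos rfl]
      have hc : (((Finset.univ.filter fun j => z j = k).card - 1 : ℕ) : ℝ) = N - 1 := by
        have h1 := hcard k
        have h2 : 1 ≤ (Finset.univ.filter fun j => z j = k).card := by rw [hsize k]; omega
        push_cast [h2]
        linarith
      rw [nsmul_eq_mul, hc]
      ring
    · -- i outside cluster k
      have hoff : ∀ j ∈ Finset.univ.filter (fun j => z j = k), Kt i j = g (z i) k := by
        intro j hj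
        have hzj : z j = k := (Finset.mem_filter.mp hj).2
        have hji : i ≠ j := by intro he; exact h (he ▸ hzj)
        rw [hKtij, if_neg hji, hzj]
      rw [Finset.sum_congr rfl hoff, Finset.sum_const, nsmul_eq_mul, hcard k, if_neg h]
      ring
  -- U is invariant under Kt
  have hUinv : ∀ v ∈ U, euc (Kt.mulVec v) ∈ U := by
    intro v hv
    rw [hUdef] at hv
    induction hv using Submodule.span_induction with
    | mem x hx =>
        obtain ⟨k, rfl⟩ := hx
        rw [hKe k]
        exact U.add_mem (U.smul_mem N (Submodule.sum_mem U (fun m _ => U.smul_mem _ (heU m))))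
          (U.smul_mem _ (heU k))
    | zero =>
        have : euc (Kt.mulVec 0) = 0 := by
          ext i
          simp [Matrix.mulVec_zero]
        rw [WithLp.ofLp_zero, this]; exact U.zero_mem
    | add x y _ _ hx hy =>
        have : euc (Kt.mulVec (x + y)) = euc (Kt.mulVec x) + euc (Kt.mulVec y) := by
          ext i
          have : Kt.mulVec ((x + y : EuclideanSpace ℝ (Fin n)) : Fin n → ℝ)
              = Kt.mulVec x + Kt.mulVec y := Matrix.mulVec_add Kt x y
          simp only [euc_apply, PiLp.add_apply, this, Pi.add_apply, Matrix.mulVec_add]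
        rw [WithLp.ofLp_add, this]; exact U.add_mem hx hy
    | smul a x _ hx =>
        have : euc (Kt.mulVec (a • x)) = a • euc (Kt.mulVec x) := by
          ext i
          have : Kt.mulVec ((a • x : EuclideanSpace ℝ (Fin n)) : Fin n → ℝ)
              = a • Kt.mulVec x := Matrix.mulVec_smul Kt a x
          simp only [euc_apply, PiLp.smul_apply, this, Pi.smul_apply, Matrix.mulVec_smul]
        rw [WithLp.ofLp_smul, this]; exact U.smul_mem a hx
  -- diagonal action on the orthogonal complement
  have hWdiag : ∀ v : EuclideanSpace ℝ (Fin n), v ∈ Uᗮ → ∀ lam : ℝ,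
      euc (Kt.mulVec v) = lam • v → v ≠ 0 → lam ≤ δ := by
    intro v hv lam hlam hv0
    have hfibv : ∀ k, ∑ j ∈ Finset.univ.filter (fun j => z j = k), v j = 0 := by
      intro k
      have h0 : ⟪e k, v⟫ = 0 := (Submodule.mem_orthogonal U v).mp hv (e k) (heU k)
      rw [inner_euc] at h0
      rw [Finset.sum_filter]
      have h6 : (∑ x, if z x = k then v x else 0) = ∑ i, e k i * v i := by
        apply Finset.sum_congr rfl
        intro j _
        by_cases h : z j = k <;> simp [hedef, h]
      rw [h6, h0]
    have hact : ∀ i, (Kt.mulVec v) i = (1 - g (z i) (z i)) * v i := by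
      intro i
      have h1 : (Kt.mulVec v) i = ∑ j, Kt i j * v j := rfl
      have h2 : ∀ j, Kt i j * v j
          = g (z i) (z j) * v j + (if i = j then (1 - g (z i) (z i)) * v j else 0) := by
        intro j
        by_cases h : i = j
        · subst h; rw [hKtij]; simp; ring
        · rw [hKtij, if_neg h, if_neg h]; ring
      rw [h1, Finset.sum_congr rfl (fun j _ => h2 j), Finset.sum_add_distrib]
      have h3 : ∑ j, g (z i) (z j) * v j = 0 := by
        rw [← hfib (fun j => g (z i) (z j) * v j)]
        apply Finset.sum_eq_zero
        intro k _
        have h4 : ∑ j ∈ Finset.univ.filter (fun j => z j = k), g (z i) (z j) * v j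
            = g (z i) k * ∑ j ∈ Finset.univ.filter (fun j => z j = k), v j := by
          rw [Finset.mul_sum]
          apply Finset.sum_congr rfl
          intro j hj
          rw [(Finset.mem_filter.mp hj).2]
        rw [h4, hfibv k, mul_zero]
      rw [h3, zero_add]
      simp
    obtain ⟨i, hi⟩ : ∃ i, v i ≠ 0 := by
      by_contra hall
      push_neg at hall
      exact hv0 (WithLp.ofLp_injective 2 (funext hall))
    have heq : lam * v i = (1 - g (z i) (z i)) * v i := by
      have h5 : euc (Kt.mulVec v) i = (lam • v) i := by rw [hlam]
      rw [euc_apply, hact i, PiLp.smul_apply, smul_eq_mul] at h5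
      exact h5.symm
    have hlameq : lam = 1 - g (z i) (z i) := mul_right_cancel₀ hi heq
    rw [hlameq, hgkk]
    exact hδ_ge (z i)
  -- quadratic form lower bound on U
  have hQF : ∀ u, u ∈ U → (N * Lmin * mσ) * ⟪u, u⟫ ≤ ⟪u, euc (Kt.mulVec u)⟫ := by
    intro u hu
    rw [hUdef] at hu
    obtain ⟨y, hy⟩ := (Submodule.mem_span_range_iff_exists_fun ℝ).mp hu
    have hui : ∀ i, u i = y (z i) := by
      intro i; rw [← hy]; exact hsum_apply y i
    have hyfib : ∀ (H : Fin r → ℝ), ∑ i, H (z i) = ∑ k, N * H k := by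
      intro H
      rw [← hfib (fun i => H (z i))]
      apply Finset.sum_congr rfl
      intro k _
      rw [Finset.sum_congr rfl (fun j hj => by rw [(Finset.mem_filter.mp hj).2]),
        Finset.sum_const, nsmul_eq_mul, hcard k]
    have hinner2 : ⟪u, u⟫ = N * ∑ k, y k ^ 2 := by
      rw [inner_euc]
      have e1 : ∑ i, u i * u i = ∑ i, y (z i) ^ 2 :=
        Finset.sum_congr rfl (fun i _ => by rw [hui i]; ring)
      have e2 : ∑ i, y (z i) ^ 2 = ∑ k, N * y k ^ 2 := hyfib (fun m => y m ^ 2)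
      rw [e1, e2, ← Finset.mul_sum]
    set Q : ℝ := ∑ m, y m * ∑ k, g m k * y k with hQdef
    set T2 : ℝ := ∑ m, (1 - g m m) * y m ^ 2 with hT2def
    have hKv : ∀ i, (Kt.mulVec u) i
        = N * (∑ k, g (z i) k * y k) + (1 - g (z i) (z i)) * y (z i) := by
      intro i
      have h1 : (Kt.mulVec u) i = ∑ j, Kt i j * u j := rfl
      have h2 : ∀ j, Kt i j * u j
          = g (z i) (z j) * y (z j) + (if i = j then (1 - g (z i) (z i)) * y (z j) else 0) := by
        intro j
        rw [hui j]
        by_cases h : i = j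
        · subst h; rw [hKtij]; simp; ring
        · rw [hKtij, if_neg h, if_neg h]; ring
      rw [h1, Finset.sum_congr rfl (fun j _ => h2 j), Finset.sum_add_distrib]
      have h3 : ∑ j, g (z i) (z j) * y (z j) = ∑ k, N * (g (z i) k * y k) :=
        hyfib (fun m => g (z i) m * y m)
      rw [h3, ← Finset.mul_sum]
      congr 1
      simp
    have hform : ⟪u, euc (Kt.mulVec u)⟫ = N * (N * Q + T2) := by
      rw [inner_euc]
      have h1 : ∀ i, u i * euc (Kt.mulVec u) i
          = y (z i) * (N * (∑ k, g (z i) k * y k) + (1 - g (z i) (z i)) * y (z i)) := by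
        intro i
        rw [euc_apply, hKv i, hui i]
      have h1' : ∑ i, y (z i) * (N * (∑ k, g (z i) k * y k) + (1 - g (z i) (z i)) * y (z i))
          = ∑ m, N * (y m * (N * (∑ k, g m k * y k) + (1 - g m m) * y m)) :=
        hyfib (fun m => y m * (N * (∑ k, g m k * y k) + (1 - g m m) * y m))
      rw [Finset.sum_congr rfl (fun i _ => h1 i), h1']
      have h2 : N * (N * Q + T2)
          = ∑ m, (N * (N * (y m * ∑ k, g m k * y k)) + N * ((1 - g m m) * y m ^ 2)) := by
        rw [Finset.sum_add_distrib, ← Finset.mul_sum, ← Finset.mul_sum, ← Finset.mul_sum,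
          ← hQdef, ← hT2def]
        ring
      rw [h2]
      apply Finset.sum_congr rfl
      intro m _
      ring
    -- bound Q from below via Rayleigh
    have hQB : Q = (fun k => s k * y k) ⬝ᵥ B.mulVec (fun k => s k * y k) := by
      have hd : (fun k => s k * y k) ⬝ᵥ B.mulVec (fun k => s k * y k)
          = ∑ m, (s m * y m) * ∑ k, B m k * (s k * y k) := rfl
      rw [hd, hQdef]
      apply Finset.sum_congr rfl
      intro m _
      rw [Finset.mul_sum, Finset.mul_sum]
      apply Finset.sum_congr rfl
      intro k _
      rw [hgs m k]
      ring
    have hRay : Lmin * (∑ k, (s k * y k) ^ 2) ≤ Q := by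
      rw [hQB]
      exact rayleigh_lower hBHerm Lmin hLmin_le _
    have hsy : mσ * ∑ k, y k ^ 2 ≤ ∑ k, (s k * y k) ^ 2 := by
      rw [Finset.mul_sum]
      apply Finset.sum_le_sum
      intro k _
      have h1 : (s k * y k) ^ 2 = (s k * s k) * y k ^ 2 := by ring
      rw [h1, hssq k]
      exact mul_le_mul_of_nonneg_right (hmσ_le k) (sq_nonneg _)
    have hQge : Lmin * (mσ * ∑ k, y k ^ 2) ≤ Q :=
      le_trans (mul_le_mul_of_nonneg_left hsy hLmin0) hRay
    have hT2ge : 0 ≤ T2 := by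
      rw [hT2def]
      apply Finset.sum_nonneg
      intro m _
      have := hgle1 m
      nlinarith [sq_nonneg (y m)]
    have hy2 : 0 ≤ ∑ k, y k ^ 2 := Finset.sum_nonneg (fun k _ => sq_nonneg _)
    rw [hform, hinner2]
    have hN0 : 0 ≤ N := by linarith
    nlinarith [mul_le_mul_of_nonneg_left hQge (mul_nonneg hN0 hN0)]
  -- ranks
  have hli : LinearIndependent ℝ e := by
    rw [Fintype.linearIndependent_iff]
    intro c hc k
    obtain ⟨i, hi⟩ := hclus k
    calc c k = c (z i) := by rw [hi]
      _ = (∑ m, c m • e m) i := (hsum_apply c i).symm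
      _ = 0 := by rw [hc]; rfl
  have hrankU : Module.finrank ℝ U = r := by
    rw [hUdef, finrank_span_eq_card hli, Fintype.card_fin]
  have hrankW : Module.finrank ℝ Uᗮ = n - r := by
    have h1 := Submodule.finrank_add_finrank_orthogonal U
    rw [hrankU, finrank_euclideanSpace_fin] at h1
    omega
  -- counting eigenvalues
  have hc1 : (Finset.univ.filter fun j => δ < hHerm.eigenvalues j).card ≤ r := by
    rw [← hrankU]
    apply card_filter_le_finrank hHerm U (fun j => δ < hHerm.eigenvalues j)
    intro j hj
    have hv := hHerm.mulVec_eigenvectorBasis j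
    have hv' : euc (Kt.mulVec (hHerm.eigenvectorBasis j))
        = hHerm.eigenvalues j • (hHerm.eigenvectorBasis j : EuclideanSpace ℝ (Fin n)) := by
      ext i
      exact congrFun hv i
    obtain ⟨u, w, huU, hwU, hsum, hMu, hMw⟩ := eig_decomp hHerm U hUinv hv'
    have hw0 : w = 0 := by
      by_contra hw0
      exact absurd (hWdiag w hwU _ hMw hw0) (not_le.mpr hj)
    rw [hsum, hw0, add_zero]
    exact huU
  have hc2 : (Finset.univ.filter fun j => hHerm.eigenvalues j < N * Lmin * mσ).card ≤ n - r := by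
    rw [← hrankW]
    apply card_filter_le_finrank hHerm Uᗮ (fun j => hHerm.eigenvalues j < N * Lmin * mσ)
    intro j hj
    have hv := hHerm.mulVec_eigenvectorBasis j
    have hv' : euc (Kt.mulVec (hHerm.eigenvectorBasis j))
        = hHerm.eigenvalues j • (hHerm.eigenvectorBasis j : EuclideanSpace ℝ (Fin n)) := by
      ext i
      exact congrFun hv i
    obtain ⟨u, w, huU, hwU, hsum, hMu, hMw⟩ := eig_decomp hHerm U hUinv hv'
    have hu0 : u = 0 := by
      by_contra hu0
      have hip : (0:ℝ) < ⟪u, u⟫ := by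
        rcases lt_or_eq_of_le (real_inner_self_nonneg (x := u)) with h | h
        · exact h
        · exact absurd (inner_self_eq_zero.mp h.symm) hu0
      have h5 : ⟪u, euc (Kt.mulVec u)⟫ = hHerm.eigenvalues j * ⟪u, u⟫ := by
        rw [hMu, real_inner_smul_right]
      have h6 := hQF u huU
      rw [h5] at h6
      have h7 : N * Lmin * mσ ≤ hHerm.eigenvalues j :=
        le_of_mul_le_mul_right h6 hip
      exact absurd h7 (not_le.mpr hj)
    rw [hsum, hu0, zero_add]
    exact hwU
  -- conclude
  have hupper : eigDesc hHerm ⟨r, by omega⟩ ≤ δ := by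
    apply eigDesc_le_of_count hHerm ⟨r, by omega⟩
    simpa using hc1
  have hlower : N * Lmin * mσ ≤ eigDesc hHerm ⟨r - 1, by omega⟩ := by
    apply le_eigDesc_of_count hHerm ⟨r - 1, by omega⟩
    have he : n - (r - 1) - 1 = n - r := by omega
    simpa [he] using hc2
  rw [hNcast] at hlower
  linarith
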